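/- Let (X, d_X) be a metric space, Y a set, f : X → Y a mapping, and A ⊆ X. For each k ∈ ℕ let (Q^k_α)_{α ∈ I_k} be a countable partition of X into pairwise disjoint sets, each of diameter at most ε_k, where ε_k → 0 as k → ∞. Define N_k(y) = Σ_{α ∈ I_k} χ_{f(Q^k_α ∩ A)}(y), the number of partition pieces Q^k_α on which f attains the value y at least once within A. Then for every y ∈ Y, N(y, f, A) = sup_{k ∈ ℕ} N_k(y) in the extended natural numbers. -/

import Mathlib

open MeasureTheory

/-- A metric space is geometrically doubling if there is `n : ℕ` such that every ball
`B(x, r)` can be covered by at most `n` balls of radius `r / 2`. -/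
def GeometricallyDoubling (X : Type*) [PseudoMetricSpace X] : Prop :=
  ∃ n : ℕ, ∀ (x : X) (r : ℝ), ∃ s : Finset X,
    s.card ≤ n ∧ Metric.ball x r ⊆ ⋃ c ∈ s, Metric.ball c (r / 2)

/-- A mapping `f : X → Y` is `μ`-measurable if the preimage of every open set is
measurable for the completion of `μ` (i.e. null measurable). -/
def MuMeasurableMap {X Y : Type*} [MeasurableSpace X] [TopologicalSpace Y]
    (μ : Measure X) (f : X → Y) : Prop :=
  ∀ E : Set Y, IsOpen E → NullMeasurableSet (f ⁻¹' E) μ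

/-- The Banach indicatrix (multiplicity function): the extended-natural-number
cardinality of `{x ∈ A | f x = y}`. -/
noncomputable def banachIndicatrix {X Y : Type*} (f : X → Y) (A : Set X) (y : Y) : ℕ∞ :=
  (A ∩ f ⁻¹' {y}).encard


lemma ENat.summable' {ι : Type*} (f : ι → ℕ∞) : Summable f :=
  ⟨⨆ s : Finset ι, ∑ i ∈ s, f i, hasSum_of_isLUB _ (isLUB_iSup)⟩

lemma ENat.eq_top_of_forall_le {x : ℕ∞} (h : ∀ n : ℕ, (n : ℕ∞) ≤ x) : x = ⊤ := by
  by_contra hx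
  lift x to ℕ using hx
  exact absurd (Nat.cast_le.mp (h (x + 1))) (by omega)

lemma ENat.tsum_set_one {α : Type*} (s : Set α) : ∑' (_ : s), (1 : ℕ∞) = s.encard := by
  classical
  rcases s.finite_or_infinite with hs | hs
  · have := hs.fintype
    rw [tsum_fintype]
    rw [Finset.sum_const, Finset.card_univ, nsmul_one, Set.encard_eq_coe_toFinset_card, Set.toFinset_card]
  · rw [hs.encard_eq]
    apply ENat.eq_top_of_forall_le
    intro n
    obtain ⟨t, hts, hcard⟩ := hs.exists_subset_card_eq n
    set g : {x // x ∈ t} → s := fun x => ⟨x.1, hts x.2⟩ with hg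
    have hginj : Function.Injective g := fun a b hab =>
      Subtype.ext (by simpa [hg] using congrArg Subtype.val hab)
    calc (n : ℕ∞) = ((t.attach.image g).card : ℕ∞) := by
          rw [Finset.card_image_of_injective _ hginj, Finset.card_attach, hcard]
    _ = ∑ _ ∈ t.attach.image g, (1 : ℕ∞) := by simp
    _ ≤ ∑' (_ : s), (1 : ℕ∞) :=
        Summable.sum_le_tsum _ (fun _ _ => zero_le) (ENat.summable' _)

lemma ENat.tsum_indicator' {ι Y : Type*} (T : ι → Set Y) (y : Y) :
    ∑' i, (T i).indicator (fun _ => (1 : ℕ∞)) y = {i | y ∈ T i}.encard := by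
  rw [← ENat.tsum_set_one {i | y ∈ T i}, tsum_subtype {i | y ∈ T i} (fun _ => (1 : ℕ∞))]
  apply tsum_congr
  intro i
  by_cases h : y ∈ T i <;> simp [Set.indicator, h]

/-- If for each `k` the space `X` is partitioned into countably many
pairwise disjoint pieces `Q k α` of diameter at most `ε k`, with `ε k → 0`, then the
Banach indicatrix `N(y, f, A)` equals the supremum over `k` of the number of pieces on
which `f` attains the value `y` within `A`. -/
theorem banachIndicatrix_eq_iSup_tsum_indicator
    {X Y : Type*} [MetricSpace X] {I : ℕ → Type*} [∀ k, Countable (I k)]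
    (f : X → Y) (A : Set X)
    (Q : (k : ℕ) → I k → Set X)
    (hdisj : ∀ k, Pairwise (Function.onFun Disjoint (Q k)))
    (hcover : ∀ k, ⋃ α, Q k α = Set.univ)
    (ε : ℕ → ENNReal)
    (hdiam : ∀ k α, EMetric.diam (Q k α) ≤ ε k)
    (hε : Filter.Tendsto ε Filter.atTop (nhds 0))
    (y : Y) :
    banachIndicatrix f A y =
      ⨆ k : ℕ, ∑' α : I k, (f '' (Q k α ∩ A)).indicator (fun _ => (1 : ℕ∞)) y := by
  classical
  set S : Set X := A ∩ f ⁻¹' {y} with hS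
  have hNk : ∀ k, ∑' α : I k, (f '' (Q k α ∩ A)).indicator (fun _ => (1 : ℕ∞)) y
      = {α : I k | (Q k α ∩ S).Nonempty}.encard := by
    intro k
    rw [ENat.tsum_indicator']
    congr 1
    ext α
    simp only [Set.mem_setOf_eq, Set.mem_image, Set.Nonempty, Set.mem_inter_iff,
      Set.mem_preimage, Set.mem_singleton_iff, hS]
    constructor
    · rintro ⟨x, ⟨hq, ha⟩, hfx⟩; exact ⟨x, hq, ha, hfx⟩
    · rintro ⟨x, hq, ha, hfx⟩; exact ⟨x, ⟨hq, ha⟩, hfx⟩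
  simp only [hNk, banachIndicatrix, ← hS]
  apply le_antisymm
  · -- S.encard ≤ iSup
    have key : ∀ t : Finset X, ↑t ⊆ S →
        (t.card : ℕ∞) ≤ ⨆ k, {α : I k | (Q k α ∩ S).Nonempty}.encard := by
      intro t hts
      set D := (t ×ˢ t).filter (fun p => p.1 ≠ p.2) with hD
      set δ : ENNReal := if hne : D.Nonempty then D.inf' hne (fun p => edist p.1 p.2) else 1
        with hδdef
      have hδ : 0 < δ := by
        rw [hδdef]
        split_ifs with hne
        · rw [Finset.lt_inf'_iff]
          intro p hp
          have : p.1 ≠ p.2 := (Finset.mem_filter.mp hp).2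
          exact edist_pos.mpr this
        · exact one_pos
      obtain ⟨k, hk⟩ := (hε.eventually (gt_mem_nhds hδ)).exists
      refine le_trans ?_ (le_iSup _ k)
      have hmem : ∀ x : X, ∃ α, x ∈ Q k α := by
        intro x
        have : x ∈ ⋃ α, Q k α := by rw [hcover k]; trivial
        exact Set.mem_iUnion.mp this
      choose g hg using hmem
      rw [← Set.encard_coe_eq_coe_finsetCard]
      apply Set.encard_le_encard_of_injOn (f := g)
      · intro x hx
        exact ⟨x, hg x, hts hx⟩
      · intro x hx x' hx' hgx
        by_contra hne
        have h1 : edist x x' ≤ ε k :=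
          le_trans (EMetric.edist_le_diam_of_mem (hg x) (hgx ▸ hg x')) (hdiam k (g x))
        have hmemD : (x, x') ∈ D := Finset.mem_filter.mpr
          ⟨Finset.mem_product.mpr ⟨Finset.mem_coe.mp hx, Finset.mem_coe.mp hx'⟩, hne⟩
        have hDne : D.Nonempty := ⟨(x, x'), hmemD⟩
        have h2 : δ ≤ edist x x' := by
          rw [hδdef, dif_pos hDne]
          exact Finset.inf'_le _ hmemD
        exact absurd (lt_of_le_of_lt h1 hk) (not_lt.mpr h2)
    rcases S.finite_or_infinite with hfin | hinf
    · rw [hfin.encard_eq_coe_toFinset_card]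
      exact key hfin.toFinset (by simp)
    · rw [hinf.encard_eq]
      refine (ENat.eq_top_of_forall_le fun n => ?_).ge
      obtain ⟨t, hts, hcard⟩ := hinf.exists_subset_card_eq n
      exact hcard ▸ key t hts
  · -- iSup ≤ S.encard
    apply iSup_le
    intro k
    rcases S.eq_empty_or_nonempty with hSe | ⟨x₀, hx₀⟩
    · simp [hSe]
    · apply Set.encard_le_encard_of_injOn
        (f := fun α => if h : (Q k α ∩ S).Nonempty then h.choose else x₀)
      · intro α hα
        simp only [Set.mem_setOf_eq] at hα
        simp only [dif_pos hα]
        exact hα.choose_spec.2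
      · intro α hα β hβ hab
        simp only [Set.mem_setOf_eq] at hα hβ
        by_contra hne
        simp only [dif_pos hα, dif_pos hβ] at hab
        exact Set.disjoint_left.mp (hdisj k hne) (hab ▸ hα.choose_spec.1) hβ.choose_spec.1
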